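/- The non-backtracking matrix B of a finite graph (edges ≥ 1) has the same eigenvalues, apart possibly from ±1, as the 2n×2n matrix B' = [[A, I − D],[I, 0]]: for every γ ∉ {1, −1}, det(B − γI) = 0 iff det(B' − γI) = 0; more precisely, the Ihara–Bass identity det(B − γI) = (γ²−1)^{|E|−n} · det((γ²−1)I + D − γA) holds, and det(B' − γI) = det(γ²I − γA + D − I) up to sign. -/

import Mathlib

open Matrix

/-- The type of directed edges of a simple graph. -/
abbrev dirEdge {V : Type*} (G : SimpleGraph V) : Type _ := {e : V × V // G.Adj e.1 e.2}

noncomputable instance {V : Type*} [Finite V] (G : SimpleGraph V) : Fintype (dirEdge G) :=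
  Fintype.ofFinite _

/-- The non-backtracking matrix `B_{(i→j),(k→l)} = δ_{jk} (1 - δ_{il})`, here with
complex entries. -/
def nbMatrixC {V : Type*} [DecidableEq V] (G : SimpleGraph V) :
    Matrix (dirEdge G) (dirEdge G) ℂ :=
  Matrix.of fun e f => if e.val.2 = f.val.1 ∧ e.val.1 ≠ f.val.2 then (1 : ℂ) else 0

namespace Stmt16
set_option linter.unusedSectionVars false
variable {V : Type*} [Fintype V] [DecidableEq V] (G : SimpleGraph V) [DecidableRel G.Adj]
def eflip (e : dirEdge G) : dirEdge G := ⟨(e.val.2, e.val.1), e.prop.symm⟩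
@[simp] lemma eflip_eflip (e : dirEdge G) : eflip G (eflip G e) = e := rfl
lemma eflip_inj : Function.Injective (eflip G) := by
  intro a b h
  have := congrArg (eflip G) h
  simpa using this
def Smat : Matrix V (dirEdge G) ℂ := of fun v e => if e.val.1 = v then 1 else 0
def Tmat : Matrix V (dirEdge G) ℂ := of fun v e => if e.val.2 = v then 1 else 0
def Jmat : Matrix (dirEdge G) (dirEdge G) ℂ := of fun e f => if f = eflip G e then 1 else 0

lemma TS : (Tmat G)ᵀ * Smat G = of fun e f => if e.val.2 = f.val.1 then (1:ℂ) else 0 := by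
  ext e f
  simp only [Matrix.mul_apply, Smat, Tmat, transpose_apply, of_apply, ite_mul, one_mul,
    zero_mul, mul_ite, mul_one, mul_zero]
  rw [Finset.sum_ite_eq Finset.univ f.val.1 (fun v => if e.val.2 = v then (1:ℂ) else 0)]
  simp

lemma nb_eq : nbMatrixC G = (Tmat G)ᵀ * Smat G - Jmat G := by
  rw [TS]
  ext e f
  simp only [nbMatrixC, Jmat, Matrix.sub_apply, of_apply]
  by_cases h2 : f = eflip G e
  · subst h2
    simp [eflip]
  · have h3 : e.val.2 = f.val.1 → e.val.1 ≠ f.val.2 := by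
      intro h1 h4
      apply h2
      apply Subtype.ext
      apply Prod.ext <;> simp [eflip, h1.symm, h4.symm]
    by_cases h1 : e.val.2 = f.val.1
    · simp [h1, h3 h1, h2]
    · simp [h1, h2]

lemma ST : Smat G * (Tmat G)ᵀ = G.adjMatrix ℂ := by
  ext v w
  rw [Matrix.mul_apply]
  by_cases h : G.Adj v w
  · rw [Finset.sum_eq_single (⟨(v, w), h⟩ : dirEdge G)]
    · simp [Smat, Tmat, h]
    · intro g _ hg
      have hne : ¬(g.val.1 = v ∧ g.val.2 = w) := fun ⟨a, b⟩ => hg (Subtype.ext (Prod.ext a b))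
      by_cases h2 : g.val.1 = v <;> by_cases h3 : g.val.2 = w
      · exact absurd ⟨h2, h3⟩ hne
      · simp [Smat, Tmat, h3]
      · simp [Smat, Tmat, h2]
      · simp [Smat, Tmat, h2]
    · simp
  · rw [Finset.sum_eq_zero, (by simp [h] : (G.adjMatrix ℂ) v w = 0)]
    intro g _
    by_cases h2 : g.val.1 = v <;> by_cases h3 : g.val.2 = w
    · exact absurd (h2 ▸ h3 ▸ g.prop) h
    · simp [Smat, Tmat, h3]
    · simp [Smat, Tmat, h2]
    · simp [Smat, Tmat, h2]

lemma TT : Tmat G * (Tmat G)ᵀ = Matrix.diagonal (fun v => (G.degree v : ℂ)) := by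
  ext v w
  rw [Matrix.mul_apply]
  by_cases h : v = w
  · subst h
    rw [diagonal_apply_eq]
    have hterm : ∀ e : dirEdge G, (Tmat G v e * (Tmat G)ᵀ e v)
        = if e.val.2 = v then (1:ℂ) else 0 := by
      intro e
      by_cases h1 : e.val.2 = v <;> simp [Tmat, h1]
    rw [Finset.sum_congr rfl (fun e _ => hterm e), Finset.sum_boole]
    congr 1
    have hc : Fintype.card {e : dirEdge G // e.val.2 = v} =
        Fintype.card (G.neighborSet v) := by
      apply Fintype.card_congr
      refine ⟨fun e => ⟨e.val.val.1, ?_⟩, fun w => ⟨⟨(w.val, v), w.prop.symm⟩, rfl⟩, ?_, ?_⟩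
      · have := e.val.prop; rw [e.prop] at this; exact this.symm
      · rintro ⟨⟨⟨a, b⟩, hab⟩, (h2 : b = v)⟩
        subst h2; rfl
      · rintro ⟨a, ha⟩; rfl
    rw [← Fintype.card_subtype, hc, G.card_neighborSet_eq_degree]
  · rw [diagonal_apply_ne _ h, Finset.sum_eq_zero]
    intro e _
    by_cases h1 : e.val.2 = v
    · have h2 : e.val.2 ≠ w := fun hh => h (h1.symm.trans hh)
      simp [Tmat, h1, h2]
      exact h
    · simp [Tmat, h1]

lemma SJ : Smat G * Jmat G = Tmat G := by
  ext v f
  rw [Matrix.mul_apply, Finset.sum_eq_single (eflip G f)]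
  · simp [Smat, Jmat, Tmat, eflip]
  · intro g _ hg
    have : f ≠ eflip G g := by
      intro hh
      exact hg (by rw [hh, eflip_eflip])
    simp [Jmat, this]
  · simp

lemma JJ : Jmat G * Jmat G = 1 := by
  ext e f
  rw [Matrix.mul_apply, Finset.sum_eq_single (eflip G e)]
  · by_cases h : e = f
    · subst h; simp [Jmat, Matrix.one_apply]
    · have hne : f ≠ eflip G (eflip G e) := by rw [eflip_eflip]; exact fun hh => h hh.symm
      simp [Jmat, hne, Matrix.one_apply, h]
      exact if_neg (fun hh => h (Eq.symm hh))
  · intro g _ hg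
    simp [Jmat, hg]
  · simp

abbrev posE : Type _ := {e : dirEdge G // (Fintype.equivFin V) e.val.1 < (Fintype.equivFin V) e.val.2}

lemma not_pos_flip (p q : posE G) : p.val.val ≠ (eflip G q.val).val := by
  intro h
  have ha : p.val.val.1 = q.val.val.2 := by rw [h]; rfl
  have hb : p.val.val.2 = q.val.val.1 := by rw [h]; rfl
  have h1 := p.prop
  rw [ha, hb] at h1
  exact absurd q.prop (not_lt.mpr (le_of_lt h1))

noncomputable def splitE : (posE G) ⊕ (posE G) ≃ dirEdge G := by
  apply Equiv.ofBijective (Sum.elim (fun p => p.val) (fun p => eflip G p.val))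
  constructor
  · rintro (p | p) (q | q) h <;> simp only [Sum.elim_inl, Sum.elim_inr] at h
    · exact congrArg Sum.inl (Subtype.ext h)
    · exact absurd (congrArg Subtype.val h) (not_pos_flip G p q)
    · exact absurd (congrArg Subtype.val h.symm) (not_pos_flip G q p)
    · exact congrArg Sum.inr (Subtype.ext (eflip_inj G h))
  · intro e
    have hne : (Fintype.equivFin V) e.val.1 ≠ (Fintype.equivFin V) e.val.2 :=
      fun h => G.ne_of_adj e.prop ((Fintype.equivFin V).injective h)
    rcases lt_or_gt_of_ne hne with h | h
    · exact ⟨Sum.inl ⟨e, h⟩, rfl⟩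
    · exact ⟨Sum.inr ⟨eflip G e, h⟩, by simp⟩


@[simp] lemma splitE_inl (p : posE G) : splitE G (Sum.inl p) = p.val := rfl
@[simp] lemma splitE_inr (p : posE G) : splitE G (Sum.inr p) = eflip G p.val := rfl

lemma K_submatrix (γ : ℂ) :
    (γ • (1 : Matrix (dirEdge G) (dirEdge G) ℂ) + Jmat G).submatrix (splitE G) (splitE G)
      = fromBlocks (γ • (1 : Matrix (posE G) (posE G) ℂ)) 1 1 (γ • 1) := by
  ext i j
  rcases i with p | p <;> rcases j with q | q
  · have hJ : q.val ≠ eflip G p.val := fun h => not_pos_flip G q p (congrArg Subtype.val h)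
    have h1 : (p.val = q.val) ↔ p = q := Subtype.ext_iff.symm
    simp [Jmat, Matrix.one_apply, hJ, h1]
  · have hγ : p.val ≠ eflip G q.val := fun h => not_pos_flip G p q (congrArg Subtype.val h)
    have h2 : (eflip G q.val = eflip G p.val) ↔ p = q :=
      ⟨fun h => (Subtype.ext (eflip_inj G h)).symm, by rintro rfl; rfl⟩
    simp [Jmat, Matrix.one_apply, hγ, h2]
  · have hγ : eflip G p.val ≠ q.val := fun h => not_pos_flip G q p (congrArg Subtype.val h.symm)
    have hJ : (q.val = eflip G (eflip G p.val)) ↔ p = q := by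
      rw [eflip_eflip]
      exact ⟨fun h => (Subtype.ext h).symm, by rintro rfl; rfl⟩
    have h2 : (q.val = p.val) ↔ p = q := ⟨fun h => (Subtype.ext h).symm, by rintro rfl; rfl⟩
    simp [Jmat, Matrix.one_apply, hγ, hJ, h2]
  · have hγ : (eflip G q.val = eflip G (eflip G p.val)) ↔ False := by
      rw [eflip_eflip]
      exact iff_false_intro (fun h => not_pos_flip G p q (congrArg Subtype.val h.symm))
    have h1 : (eflip G p.val = eflip G q.val) ↔ p = q :=
      ⟨fun h => Subtype.ext (eflip_inj G h), by rintro rfl; rfl⟩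
    have hγ' : eflip G q.val ≠ p.val := fun h => not_pos_flip G p q (congrArg Subtype.val h.symm)
    simp [Jmat, Matrix.one_apply, h1, hγ, hγ']

lemma det_K (γ : ℂ) (hγ : γ ≠ 0) :
    (γ • (1 : Matrix (dirEdge G) (dirEdge G) ℂ) + Jmat G).det
      = (γ ^ 2 - 1) ^ (Fintype.card (posE G)) := by
  rw [← Matrix.det_submatrix_equiv_self (splitE G), K_submatrix]
  letI : Invertible (γ • (1 : Matrix (posE G) (posE G) ℂ)) :=
    ⟨γ⁻¹ • 1,
     by simp [Matrix.smul_mul, Matrix.mul_smul, smul_smul, inv_mul_cancel₀ hγ, mul_inv_cancel₀ hγ],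
     by simp [Matrix.smul_mul, Matrix.mul_smul, smul_smul, inv_mul_cancel₀ hγ, mul_inv_cancel₀ hγ]⟩
  rw [Matrix.det_fromBlocks₂₂]
  have hinv : ⅟(γ • (1 : Matrix (posE G) (posE G) ℂ)) = γ⁻¹ • 1 := rfl
  have h1 : γ • (1 : Matrix (posE G) (posE G) ℂ) - 1 * ⅟(γ • 1) * 1 = (γ - γ⁻¹) • 1 := by
    rw [hinv, Matrix.one_mul, Matrix.mul_one, sub_smul]
  rw [h1, Matrix.det_smul, Matrix.det_smul, Matrix.det_one, mul_one, mul_one, ← mul_pow,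
    mul_sub, mul_inv_cancel₀ hγ, ← sq]

lemma card_dirEdge : Fintype.card (dirEdge G) = 2 * G.edgeFinset.card := by
  rw [← SimpleGraph.dart_card_eq_twice_card_edges]
  apply Fintype.card_congr
  exact ⟨fun e => ⟨e.val, e.prop⟩, fun d => ⟨d.toProd, d.adj⟩, fun e => rfl, fun d => rfl⟩

lemma card_posE : Fintype.card (posE G) = G.edgeFinset.card := by
  have h2 : Fintype.card (posE G ⊕ posE G) = Fintype.card (dirEdge G) :=
    Fintype.card_congr (splitE G)
  rw [Fintype.card_sum, card_dirEdge] at h2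
  omega


lemma key1 (γ : ℂ) (hγ : γ ≠ 0) (h1 : γ ^ 2 - 1 ≠ 0) :
    (γ ^ 2 - 1) ^ (Fintype.card V) * (nbMatrixC G - γ • 1).det
      = (γ ^ 2 - 1) ^ (G.edgeFinset.card) *
        ((γ ^ 2 - 1) • (1 : Matrix V V ℂ) +
          Matrix.diagonal (fun v => (G.degree v : ℂ)) - γ • G.adjMatrix ℂ).det := by
  have hprod : (γ • (1 : Matrix (dirEdge G) (dirEdge G) ℂ) + Jmat G) * (γ • 1 - Jmat G)
      = (γ ^ 2 - 1) • 1 := by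
    rw [Matrix.add_mul, Matrix.mul_sub, Matrix.mul_sub, JJ]
    simp only [Matrix.smul_mul, Matrix.mul_smul, Matrix.one_mul, Matrix.mul_one, smul_smul]
    rw [sub_smul, one_smul, ← sq]
    abel
  have hKK' : (γ • (1 : Matrix (dirEdge G) (dirEdge G) ℂ) + Jmat G) *
      ((γ ^ 2 - 1)⁻¹ • (γ • 1 - Jmat G)) = 1 := by
    rw [Matrix.mul_smul, hprod, smul_smul, inv_mul_cancel₀ h1, one_smul]
  have hBK : nbMatrixC G - γ • 1 =
      (γ • 1 + Jmat G) *
        (((γ ^ 2 - 1)⁻¹ • (γ • 1 - Jmat G)) * ((Tmat G)ᵀ * Smat G) - 1) := by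
    rw [Matrix.mul_sub, ← Matrix.mul_assoc, hKK', Matrix.one_mul, Matrix.mul_one, nb_eq]
    abel
  have hSKT : Smat G * ((γ ^ 2 - 1)⁻¹ • (γ • 1 - Jmat G)) * (Tmat G)ᵀ
      = (γ ^ 2 - 1)⁻¹ •
        (γ • G.adjMatrix ℂ - Matrix.diagonal fun v => (G.degree v : ℂ)) := by
    simp only [Matrix.mul_smul, Matrix.smul_mul, Matrix.mul_sub, Matrix.sub_mul,
      Matrix.mul_one]
    rw [SJ, ST, TT]
  have hswap : (((γ ^ 2 - 1)⁻¹ • (γ • 1 - Jmat G)) * ((Tmat G)ᵀ * Smat G) - 1).det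
      = (1 - Smat G * ((γ ^ 2 - 1)⁻¹ • (γ • 1 - Jmat G)) * (Tmat G)ᵀ).det := by
    rw [← neg_sub, Matrix.det_neg, card_dirEdge, pow_mul, neg_one_sq, one_pow, one_mul,
      ← Matrix.mul_assoc, sub_eq_add_neg, ← Matrix.neg_mul, Matrix.det_one_add_mul_comm,
      Matrix.mul_neg, ← sub_eq_add_neg, ← Matrix.mul_assoc]
  rw [hBK, Matrix.det_mul, hswap, hSKT, det_K G γ hγ, card_posE, ← mul_assoc,
    mul_comm ((γ ^ 2 - 1) ^ Fintype.card V), mul_assoc]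
  congr 1
  rw [← Matrix.det_smul]
  congr 1
  rw [smul_sub, smul_smul, mul_inv_cancel₀ h1, one_smul]
  abel

lemma key2 (γ : ℂ) (hγ : γ ≠ 0) :
    (Matrix.fromBlocks (G.adjMatrix ℂ)
        (1 - Matrix.diagonal (fun v => (G.degree v : ℂ))) 1 0 - γ • 1).det
      = (γ ^ 2 • (1 : Matrix V V ℂ) - γ • G.adjMatrix ℂ +
          Matrix.diagonal (fun v => (G.degree v : ℂ)) - 1).det := by
  have hb : Matrix.fromBlocks (G.adjMatrix ℂ)
        (1 - Matrix.diagonal (fun v => (G.degree v : ℂ))) 1 0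
        - γ • (1 : Matrix (V ⊕ V) (V ⊕ V) ℂ)
      = Matrix.fromBlocks (G.adjMatrix ℂ - γ • 1)
        (1 - Matrix.diagonal (fun v => (G.degree v : ℂ))) 1 (-(γ • 1)) := by
    rw [← Matrix.fromBlocks_one, Matrix.fromBlocks_smul, sub_eq_add_neg,
      Matrix.fromBlocks_neg, Matrix.fromBlocks_add]
    congr 1 <;> simp [sub_eq_add_neg]
  letI : Invertible (-(γ • (1 : Matrix V V ℂ))) :=
    ⟨-(γ⁻¹ • 1),
     by simp [Matrix.smul_mul, Matrix.mul_smul, smul_smul, inv_mul_cancel₀ hγ,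
       mul_inv_cancel₀ hγ],
     by simp [Matrix.smul_mul, Matrix.mul_smul, smul_smul, inv_mul_cancel₀ hγ,
       mul_inv_cancel₀ hγ]⟩
  rw [hb, Matrix.det_fromBlocks₂₂]
  have hinv : ⅟(-(γ • (1 : Matrix V V ℂ))) = -(γ⁻¹ • 1) := rfl
  rw [hinv, Matrix.mul_one, Matrix.mul_neg, Matrix.mul_smul, Matrix.mul_one, sub_neg_eq_add]
  have hm : γ ^ 2 • (1 : Matrix V V ℂ) - γ • G.adjMatrix ℂ +
        Matrix.diagonal (fun v => (G.degree v : ℂ)) - 1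
      = (-γ) • (G.adjMatrix ℂ - γ • 1 +
          γ⁻¹ • (1 - Matrix.diagonal (fun v => (G.degree v : ℂ)))) := by
    simp only [smul_add, smul_sub, smul_smul, neg_mul, mul_inv_cancel₀ hγ, neg_smul,
      one_smul, neg_neg, ← sq]
    abel
  have hneg : -(γ • (1 : Matrix V V ℂ)) = (-γ) • 1 := (neg_smul γ _).symm
  rw [hm, hneg, Matrix.det_smul, Matrix.det_smul, Matrix.det_one, mul_one]


open Polynomial in
lemma eval_det_aux {ι : Type*} [Fintype ι] [DecidableEq ι] (M N P : Matrix ι ι ℂ) (γ : ℂ) :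
    Polynomial.eval γ ((M.map Polynomial.C + (Polynomial.X : Polynomial ℂ) • N.map Polynomial.C +
      ((Polynomial.X : Polynomial ℂ) ^ 2) • P.map Polynomial.C).det) = (M + γ • N + γ ^ 2 • P).det := by
  rw [← Polynomial.coe_evalRingHom, RingHom.map_det]
  congr 1
  ext i j
  simp [Matrix.map_apply, Matrix.add_apply, Matrix.smul_apply, smul_eq_mul]
  ring

lemma glue (f g : ℂ → ℂ) (p q : Polynomial ℂ) (hp : ∀ γ, p.eval γ = f γ)
    (hq : ∀ γ, q.eval γ = g γ)
    (h : ∀ γ : ℂ, γ ≠ 0 → γ ^ 2 - 1 ≠ 0 → f γ = g γ) (γ : ℂ) : f γ = g γ := by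
  have hsub : ({0, 1, -1}ᶜ : Set ℂ) ⊆ {x | (p - q).IsRoot x} := by
    intro x hx
    simp only [Set.mem_compl_iff, Set.mem_insert_iff, Set.mem_singleton_iff, not_or] at hx
    obtain ⟨h0, h1', h2'⟩ := hx
    have hsq : x ^ 2 - 1 ≠ 0 := by
      intro hh
      have h3 : (x - 1) * (x + 1) = 0 := by linear_combination hh
      rcases mul_eq_zero.mp h3 with h4 | h4
      · exact h1' (sub_eq_zero.mp h4)
      · exact h2' (eq_neg_of_add_eq_zero_left h4)
    simp [Polynomial.IsRoot, hp, hq, h x h0 hsq]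
  have hfin : ({0, 1, -1} : Set ℂ).Finite :=
    ((Set.finite_singleton _).insert _).insert _
  have hpq : p = q :=
    sub_eq_zero.mp (Polynomial.eq_zero_of_infinite_isRoot _ ((hfin.infinite_compl).mono hsub))
  rw [← hp, ← hq, hpq]

end Stmt16

open Polynomial in
/-- the Ihara–Bass identity
`det(B − γI) = (γ²−1)^{|E|−n} det((γ²−1)I + D − γA)` (stated in the equivalent
polynomial form, multiplied by `(γ²−1)^n`), the block-determinant identity
`det(B' − γI) = det(γ²I − γA + D − I)` for `B' = [[A, I−D],[I, 0]]`, and the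
resulting equivalence of eigenvalues of `B` and `B'` away from `±1`. -/
theorem stmt16 {V : Type*} [Fintype V] [DecidableEq V] (G : SimpleGraph V)
    [DecidableRel G.Adj] (hE : 1 ≤ G.edgeFinset.card) :
    (∀ γ : ℂ, (γ ^ 2 - 1) ^ (Fintype.card V) * (nbMatrixC G - γ • 1).det
        = (γ ^ 2 - 1) ^ (G.edgeFinset.card) *
          ((γ ^ 2 - 1) • (1 : Matrix V V ℂ) +
            Matrix.diagonal (fun v => (G.degree v : ℂ)) - γ • G.adjMatrix ℂ).det) ∧
    (∀ γ : ℂ,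
      (Matrix.fromBlocks (G.adjMatrix ℂ)
          (1 - Matrix.diagonal (fun v => (G.degree v : ℂ))) 1 0 - γ • 1).det
        = (γ ^ 2 • (1 : Matrix V V ℂ) - γ • G.adjMatrix ℂ +
            Matrix.diagonal (fun v => (G.degree v : ℂ)) - 1).det) ∧
    (∀ γ : ℂ, γ ≠ 1 → γ ≠ -1 →
      ((nbMatrixC G - γ • 1).det = 0 ↔
        (Matrix.fromBlocks (G.adjMatrix ℂ)
          (1 - Matrix.diagonal (fun v => (G.degree v : ℂ))) 1 0 - γ • 1).det = 0)) := by
  have part1 : ∀ γ : ℂ, (γ ^ 2 - 1) ^ (Fintype.card V) * (nbMatrixC G - γ • 1).det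
      = (γ ^ 2 - 1) ^ (G.edgeFinset.card) *
        ((γ ^ 2 - 1) • (1 : Matrix V V ℂ) +
          Matrix.diagonal (fun v => (G.degree v : ℂ)) - γ • G.adjMatrix ℂ).det := by
    intro γ
    refine Stmt16.glue _ _
      ((X ^ 2 - 1) ^ (Fintype.card V) *
        ((nbMatrixC G).map C + (X : ℂ[X]) • (-1 : Matrix (dirEdge G) (dirEdge G) ℂ).map C +
          ((X : ℂ[X]) ^ 2) • (0 : Matrix (dirEdge G) (dirEdge G) ℂ).map C).det)
      ((X ^ 2 - 1) ^ (G.edgeFinset.card) *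
        ((Matrix.diagonal (fun v => (G.degree v : ℂ)) - 1).map C +
          (X : ℂ[X]) • (-(G.adjMatrix ℂ)).map C + ((X : ℂ[X]) ^ 2) • (1 : Matrix V V ℂ).map C).det)
      ?_ ?_ (fun δ h0 h1 => Stmt16.key1 G δ h0 h1) γ
    · intro δ
      rw [Polynomial.eval_mul, Polynomial.eval_pow, Polynomial.eval_sub, Polynomial.eval_pow,
        Polynomial.eval_X, Polynomial.eval_one, Stmt16.eval_det_aux]
      congr 2
      simp [sub_eq_add_neg]
    · intro δ
      rw [Polynomial.eval_mul, Polynomial.eval_pow, Polynomial.eval_sub, Polynomial.eval_pow,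
        Polynomial.eval_X, Polynomial.eval_one, Stmt16.eval_det_aux]
      congr 2
      rw [sub_smul, one_smul, smul_neg]
      abel
  have part2 : ∀ γ : ℂ,
      (Matrix.fromBlocks (G.adjMatrix ℂ)
          (1 - Matrix.diagonal (fun v => (G.degree v : ℂ))) 1 0 - γ • 1).det
        = (γ ^ 2 • (1 : Matrix V V ℂ) - γ • G.adjMatrix ℂ +
            Matrix.diagonal (fun v => (G.degree v : ℂ)) - 1).det := by
    intro γ
    refine Stmt16.glue _ _
      (((Matrix.fromBlocks (G.adjMatrix ℂ)
          (1 - Matrix.diagonal (fun v => (G.degree v : ℂ))) 1 0).map C +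
        (X : ℂ[X]) • (-1 : Matrix (V ⊕ V) (V ⊕ V) ℂ).map C +
        ((X : ℂ[X]) ^ 2) • (0 : Matrix (V ⊕ V) (V ⊕ V) ℂ).map C).det)
      (((Matrix.diagonal (fun v => (G.degree v : ℂ)) - 1).map C +
          (X : ℂ[X]) • (-(G.adjMatrix ℂ)).map C + ((X : ℂ[X]) ^ 2) • (1 : Matrix V V ℂ).map C).det)
      ?_ ?_ (fun δ h0 _ => Stmt16.key2 G δ h0) γ
    · intro δ
      rw [Stmt16.eval_det_aux]
      congr 1
      simp [sub_eq_add_neg]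
    · intro δ
      rw [Stmt16.eval_det_aux]
      congr 1
      rw [smul_neg]
      abel
  refine ⟨part1, part2, ?_⟩
  intro γ hγ1 hγ2
  have h1 : γ ^ 2 - 1 ≠ 0 := by
    intro hh
    have h3 : (γ - 1) * (γ + 1) = 0 := by linear_combination hh
    rcases mul_eq_zero.mp h3 with h4 | h4
    · exact hγ1 (sub_eq_zero.mp h4)
    · exact hγ2 (eq_neg_of_add_eq_zero_left h4)
  have hmm : γ ^ 2 • (1 : Matrix V V ℂ) - γ • G.adjMatrix ℂ +
        Matrix.diagonal (fun v => (G.degree v : ℂ)) - 1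
      = (γ ^ 2 - 1) • (1 : Matrix V V ℂ) +
        Matrix.diagonal (fun v => (G.degree v : ℂ)) - γ • G.adjMatrix ℂ := by
    rw [sub_smul, one_smul]
    abel
  have e1 := part1 γ
  have hn : (γ ^ 2 - 1) ^ (Fintype.card V) ≠ 0 := pow_ne_zero _ h1
  have hm : (γ ^ 2 - 1) ^ (G.edgeFinset.card) ≠ 0 := pow_ne_zero _ h1
  rw [part2 γ, hmm]
  constructor
  · intro h0
    rw [h0, mul_zero] at e1
    rcases mul_eq_zero.mp e1.symm with h4 | h4
    · exact absurd h4 hm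
    · exact h4
  · intro h0
    rw [h0, mul_zero] at e1
    rcases mul_eq_zero.mp e1 with h4 | h4
    · exact absurd h4 hn
    · exact h4
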